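/- For all r ∈ (0, ln(4/3)], the inequality e^{r}·(e^{r} − r − 1) ≤ 2·r²·(2 − e^{r}) holds. -/
import Mathlib


/-- The key scalar estimate for quadratic convergence of the full-step proximal-Newton
method: for `0 < r ≤ ln(4/3)`, `e^r (e^r - r - 1) ≤ 2 r² (2 - e^r)`. -/
theorem newton_contraction_ineq (r : ℝ) (hr0 : 0 < r) (hr : r ≤ Real.log (4 / 3)) :
    Real.exp r * (Real.exp r - r - 1) ≤ 2 * r ^ 2 * (2 - Real.exp r) := by
  have h13 : r ≤ 1 / 3 := by
    have := Real.log_le_sub_one_of_pos (show (0:ℝ) < 4 / 3 by norm_num)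
    linarith
  have h43 : Real.exp r ≤ 4 / 3 := by
    calc Real.exp r ≤ Real.exp (Real.log (4 / 3)) := Real.exp_le_exp.mpr hr
      _ = 4 / 3 := Real.exp_log (by norm_num)
  have habs : |r| ≤ 1 := by rw [abs_of_pos hr0]; linarith
  have hb := Real.exp_bound habs (n := 3) (by norm_num)
  rw [Finset.sum_range_succ, Finset.sum_range_succ, Finset.sum_range_succ,
    Finset.sum_range_zero] at hb
  simp only [pow_zero, pow_one] at hb
  norm_num [Nat.factorial] at hb
  rw [abs_of_pos hr0] at hb
  have he : Real.exp r ≤ 1 + r + r ^ 2 / 2 + r ^ 3 * (2 / 9) := by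
    have := abs_le.mp hb
    nlinarith [this.2]
  nlinarith [sq_nonneg r, Real.add_one_le_exp r, pow_pos hr0 3]
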